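/- arXiv:0909.3162 — 5 statements merged into one kernel-verified Lean document; each statement's English description precedes it below -/
import Mathlib

section
/- For a monad T = (T, μ, η) on a category A, if Tμ = μT as natural transformations TTT → TT, then μ : TT → T is an isomorphism. -/
open CategoryTheory

theorem stmt_8 {A : Type*} [Category A] (T : Monad A)
    (h : ∀ (X : A), T.map (T.μ.app X) = T.μ.app (T.obj X)) :
    IsIso T.μ := by
  have : ∀ X : A, IsIso (T.μ.app X) := by
    intro X
    refine ⟨T.map (T.η.app X), ?_, T.right_unit X⟩
    have hn := T.μ.naturality (T.η.app X)
    simp only [Functor.comp_map] at hn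
    rw [← h, ← Functor.map_comp, T.right_unit] at hn; simp only [CategoryTheory.Functor.map_id] at hn
    exact hn.symm
  exact NatIso.isIso_of_isIso_app T.μ
end

section
/- For a comonad S = (S, δ, ε) on a category A, the comultiplication δ : S → SS is an isomorphism if and only if Sε = εS as natural transformations SS → S. -/
open CategoryTheory

theorem stmt_10 {A : Type*} [Category A] (S : Comonad A) :
    IsIso S.δ ↔ ∀ (X : A), S.map (S.ε.app X) = S.ε.app (S.obj X) := by
  rw [NatTrans.isIso_iff_isIso_app]
  constructor
  · intro h X
    have := h X
    have h1 := S.right_counit X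
    have h2 := S.left_counit X
    exact (cancel_epi (S.δ.app X)).mp (h1.trans h2.symm)
  · intro h X
    refine ⟨S.ε.app (S.obj X), ?_, ?_⟩
    · rw [← h]; exact S.right_counit X
    · have : S.map (S.δ.app X ≫ S.ε.app (S.obj X)) = 𝟙 _ := by
        rw [S.left_counit X, S.map_id]
      rw [S.map_comp, h] at this
      have nat := S.ε.naturality (S.δ.app X)
      simp only [Functor.id_map] at nat
      rw [← nat]
      exact this
end

section
/- For an adjunction F ⊣ G with unit η and counit ε, the natural transformation ηG : G → GFG is an isomorphism if and only if GεF : GFGF → GF is an isomorphism. -/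
open CategoryTheory

theorem stmt_14 {A B : Type*} [Category A] [Category B] (F : A ⥤ B) (G : B ⥤ A)
    (adj : F ⊣ G) :
    (∀ (Y : B), IsIso (adj.unit.app (G.obj Y))) ↔
    (∀ (X : A), IsIso (G.map (adj.counit.app (F.obj X)))) := by
  constructor
  · intro h X
    have hi := h (F.obj X)
    have tri := adj.right_triangle_components (F.obj X)
    have : G.map (adj.counit.app (F.obj X)) = inv (adj.unit.app (G.obj (F.obj X))) :=
      (IsIso.inv_eq_of_hom_inv_id tri).symm
    rw [this]
    infer_instance
  · intro h Y
    have h1 := h (G.obj Y)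
    -- η_{GF(GY)} = GF(η_{GY})
    have e1 : adj.unit.app (G.obj (F.obj (G.obj Y)))
        = G.map (F.map (adj.unit.app (G.obj Y))) := by
      have t1 := adj.right_triangle_components (F.obj (G.obj Y))
      have t2 : G.map (F.map (adj.unit.app (G.obj Y))) ≫
          G.map (adj.counit.app (F.obj (G.obj Y))) = 𝟙 _ := by
        simp only [Functor.id_obj, Functor.comp_obj, ← G.map_comp,
          adj.left_triangle_components, G.map_id]
      exact (cancel_mono (G.map (adj.counit.app (F.obj (G.obj Y))))).mp (t1.trans t2.symm)
    refine ⟨⟨G.map (adj.counit.app Y), adj.right_triangle_components Y, ?_⟩⟩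
    have nat := adj.unit.naturality (G.map (adj.counit.app Y))
    simp only [Functor.id_map, Functor.comp_map, Functor.id_obj, Functor.comp_obj] at nat
    rw [nat, e1, ← G.map_comp, ← F.map_comp, adj.right_triangle_components]
    simp
end

section
/- For an adjunction F ⊣ G with unit η and counit ε, εF : FGF → F is an isomorphism if and only if ηG : G → GFG is an isomorphism. -/
open CategoryTheory

theorem stmt_15 {A B : Type*} [Category A] [Category B] (F : A ⥤ B) (G : B ⥤ A)
    (adj : F ⊣ G) :
    (∀ (X : A), IsIso (adj.counit.app (F.obj X))) ↔
    (∀ (Y : B), IsIso (adj.unit.app (G.obj Y))) := by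
  constructor
  · intro h Y
    let m : G.obj Y ⟶ G.obj (F.obj (G.obj Y)) := adj.unit.app (G.obj Y)
    let u : G.obj (F.obj (G.obj Y)) ⟶ G.obj Y := G.map (adj.counit.app Y)
    have htri : m ≫ u = 𝟙 (G.obj Y) := adj.right_triangle_components Y
    -- F.map (η (G Y)) is iso
    haveI := h (G.obj Y)
    haveI hFη : IsIso (F.map (adj.unit.app (G.obj Y))) := by
      haveI : IsIso (F.map (adj.unit.app (G.obj Y)) ≫ adj.counit.app (F.obj (G.obj Y))) := by
        rw [adj.left_triangle_components (G.obj Y)]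
        exact IsIso.id _
      exact IsIso.of_isIso_comp_right (F.map (adj.unit.app (G.obj Y)))
        (adj.counit.app (F.obj (G.obj Y)))
    -- η at G (F (G Y)) is iso
    haveI hη' : IsIso (adj.unit.app (G.obj (F.obj (G.obj Y)))) := by
      haveI : IsIso (adj.unit.app (G.obj (F.obj (G.obj Y))) ≫
          G.map (adj.counit.app (F.obj (G.obj Y)))) := by
        rw [adj.right_triangle_components (F.obj (G.obj Y))]
        exact IsIso.id _
      exact IsIso.of_isIso_comp_right (adj.unit.app (G.obj (F.obj (G.obj Y))))
        (G.map (adj.counit.app (F.obj (G.obj Y))))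
    -- G.map (F.map u) is iso
    haveI hGFu : IsIso (G.map (F.map u)) := by
      haveI : IsIso (G.map (F.map m) ≫ G.map (F.map u)) := by
        rw [← G.map_comp, ← F.map_comp, htri, F.map_id, G.map_id]
        exact IsIso.id _
      haveI : IsIso (G.map (F.map m)) := inferInstance
      exact IsIso.of_isIso_comp_left (G.map (F.map m)) (G.map (F.map u))
    -- u ≫ m is iso via naturality of the unit
    have hnat : u ≫ m = adj.unit.app (G.obj (F.obj (G.obj Y))) ≫ G.map (F.map u) := by
      simpa [m, u] using adj.unit.naturality u
    haveI hum : IsIso (u ≫ m) := by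
      rw [hnat]
      infer_instance
    haveI hmono : IsSplitMono m := ⟨⟨u, htri⟩⟩
    haveI hsplit : IsSplitEpi m :=
      ⟨⟨inv (u ≫ m) ≫ u, by rw [Category.assoc, IsIso.inv_comp_eq, Category.comp_id]⟩⟩
    exact isIso_of_mono_of_isSplitEpi m
  · intro h X
    let m : F.obj (G.obj (F.obj X)) ⟶ F.obj X := adj.counit.app (F.obj X)
    let u : F.obj X ⟶ F.obj (G.obj (F.obj X)) := F.map (adj.unit.app X)
    have htri : u ≫ m = 𝟙 (F.obj X) := adj.left_triangle_components X
    haveI := h (F.obj X)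
    haveI hGε : IsIso (G.map (adj.counit.app (F.obj X))) := by
      haveI : IsIso (adj.unit.app (G.obj (F.obj X)) ≫ G.map (adj.counit.app (F.obj X))) := by
        rw [adj.right_triangle_components (F.obj X)]
        exact IsIso.id _
      exact IsIso.of_isIso_comp_left (adj.unit.app (G.obj (F.obj X)))
        (G.map (adj.counit.app (F.obj X)))
    haveI hε' : IsIso (adj.counit.app (F.obj (G.obj (F.obj X)))) := by
      haveI : IsIso (F.map (adj.unit.app (G.obj (F.obj X)))) := inferInstance
      haveI : IsIso (F.map (adj.unit.app (G.obj (F.obj X))) ≫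
          adj.counit.app (F.obj (G.obj (F.obj X)))) := by
        rw [adj.left_triangle_components (G.obj (F.obj X))]
        exact IsIso.id _
      exact IsIso.of_isIso_comp_left (F.map (adj.unit.app (G.obj (F.obj X))))
        (adj.counit.app (F.obj (G.obj (F.obj X))))
    haveI hFGu : IsIso (F.map (G.map u)) := by
      haveI : IsIso (F.map (G.map u) ≫ F.map (G.map m)) := by
        rw [← F.map_comp, ← G.map_comp, htri, G.map_id, F.map_id]
        exact IsIso.id _
      haveI : IsIso (F.map (G.map m)) := inferInstance
      exact IsIso.of_isIso_comp_right (F.map (G.map u)) (F.map (G.map m))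
    -- m ≫ u is iso via naturality of the counit
    have hnat : m ≫ u = F.map (G.map u) ≫ adj.counit.app (F.obj (G.obj (F.obj X))) := by
      simpa [m, u] using (adj.counit.naturality u).symm
    haveI hmu : IsIso (m ≫ u) := by
      rw [hnat]
      infer_instance
    haveI hmono : IsSplitMono m :=
      ⟨⟨u ≫ inv (m ≫ u), by rw [← Category.assoc, IsIso.hom_inv_id]⟩⟩
    haveI hsplit : IsSplitEpi m := ⟨⟨u, htri⟩⟩
    exact isIso_of_mono_of_isSplitEpi m
end

section
/- Let F ⊣ G be an adjunction with unit η and counit ε such that η_A is a strong (extremal) epimorphism for all A and ε_B is an isomorphism for some fixed object B' of B. Then for any monomorphism f : A → G(B') in A, the component η_A is an isomorphism; that is, the full subcategory of objects A with η_A an isomorphism is closed under subobjects of objects of the form G(B') with ε_{B'} an isomorphism. -/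
open CategoryTheory

/-- An epimorphism `e` is extremal if whenever `e = f ≫ m` with `m` a monomorphism,
`m` is an isomorphism. -/
def ExtremalEpi' {C : Type*} [Category C] {X Y : C} (e : X ⟶ Y) : Prop :=
  Epi e ∧ ∀ ⦃Z : C⦄ (f : X ⟶ Z) (m : Z ⟶ Y), Mono m → e = f ≫ m → IsIso m

theorem stmt_19 {A B : Type*} [Category A] [Category B] (F : A ⥤ B) (G : B ⥤ A)
    (adj : F ⊣ G) (hext : ∀ (X : A), ExtremalEpi' (adj.unit.app X))
    (B' : B) (hB' : IsIso (adj.counit.app B'))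
    (X : A) (f : X ⟶ G.obj B') (hf : Mono f) :
    IsIso (adj.unit.app X) := by
  have h : f = adj.unit.app X ≫ G.map ((adj.homEquiv X B').symm f) := by
    have := ((adj.homEquiv X B').apply_symm_apply f).symm
    rwa [Adjunction.homEquiv_unit] at this
  have hm : Mono (adj.unit.app X) := by
    rw [h] at hf
    exact mono_of_mono (adj.unit.app X) (G.map ((adj.homEquiv X B').symm f))
  exact (hext X).2 (𝟙 X) (adj.unit.app X) hm (by simp)
end
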